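/- Let α₁⋯αₙ and β₁⋯β_m be sequences of atoms over Σ representing ideals I and J respectively. If I ⊆ J, then there exists a function f : {1,…,n} → {1,…,m} such that (1) f is monotone (f(i) ≤ f(i+1)), (2) Idl(α_i) ⊆ Idl(β_{f(i)}) for all i, and (3) if β_j is a single atom then f⁻¹(j) has at most one element. -/

import Mathlib

def IsDirectedLang {A : Type*} (L : Set (List A)) : Prop :=
  ∀ u ∈ L, ∀ v ∈ L, ∃ w ∈ L, u.Sublist w ∧ v.Sublist w

def dcl {A : Type*} (L : Set (List A)) : Set (List A) := {u | ∃ v ∈ L, u.Sublist v}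

def DownwardClosed {A : Type*} (D : Set (List A)) : Prop :=
  ∀ u v : List A, u.Sublist v → v ∈ D → u ∈ D

def IsIdeal {A : Type*} (I : Set (List A)) : Prop :=
  I.Nonempty ∧ DownwardClosed I ∧ IsDirectedLang I

inductive Atom (A : Type*) where
  | single : A → Atom A
  | alph : Finset A → Atom A

def Atom.lang {A : Type*} : Atom A → Set (List A)
  | .single a => {[], [a]}
  | .alph d => {w | ∀ c ∈ w, c ∈ d}

def Atom.Valid {A : Type*} : Atom A → Prop
  | .single _ => True
  | .alph d => d.Nonempty

def conc {A : Type*} (L M : Set (List A)) : Set (List A) :=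
  {w | ∃ u ∈ L, ∃ v ∈ M, w = u ++ v}

def Idl {A : Type*} : List (Atom A) → Set (List A)
  | [] => {[]}
  | α :: r => conc α.lang (Idl r)

def LeftAbsorbs {A : Type*} (α β : Atom A) : Prop := Idl [α, β] = Idl [α]
def RightAbsorbs {A : Type*} (α β : Atom A) : Prop := Idl [α, β] = Idl [β]
def Absorptive {A : Type*} (α β : Atom A) : Prop := LeftAbsorbs α β ∨ RightAbsorbs α β
def Reduced {A : Type*} (r : List (Atom A)) : Prop := r.Chain' fun α β => ¬ Absorptive α β

def atomWeight {A : Type*} (k : ℕ) : Atom A → ℕ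
  | .single _ => 1
  | .alph d => (k+1) ^ d.card

def repWeight {A : Type*} (k : ℕ) (r : List (Atom A)) : ℕ := (r.map (atomWeight k)).sum


lemma atom_nil_mem {A : Type*} (γ : Atom A) : [] ∈ γ.lang := by
  cases γ with
  | single c => left; rfl
  | alph d => intro c hc; simp at hc

lemma atom_dcl {A : Type*} (γ : Atom A) : DownwardClosed γ.lang := by
  intro u v huv hv
  cases γ with
  | single c =>
    rcases hv with hv | hv
    · subst hv; rw [List.sublist_nil.mp huv]; left; rfl
    · subst hv; rcases List.sublist_singleton.mp huv with h | h
      · subst h; left; rfl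
      · subst h; right; rfl
  | alph d => intro c hc; exact hv c (huv.subset hc)

lemma Idl_dcl {A : Type*} (r : List (Atom A)) : DownwardClosed (Idl r) := by
  induction r with
  | nil =>
    intro u v huv hv
    have hv' : v = [] := hv
    subst hv'
    have : u = [] := List.sublist_nil.mp huv
    subst this
    rfl
  | cons γ r ih =>
    intro u v huv hv
    obtain ⟨p, hp, q, hq, rfl⟩ := hv
    obtain ⟨u₁, u₂, rfl, h1, h2⟩ := List.sublist_append_iff.mp huv
    exact ⟨u₁, atom_dcl γ u₁ p h1 hp, u₂, ih u₂ q h2 hq, rfl⟩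

lemma Idl_nil_mem {A : Type*} (r : List (Atom A)) : [] ∈ Idl r := by
  induction r with
  | nil => rfl
  | cons γ r ih => exact ⟨[], atom_nil_mem γ, [], ih, rfl⟩

lemma Idl_singleton {A : Type*} (γ : Atom A) : Idl [γ] = γ.lang := by
  ext w
  constructor
  · rintro ⟨u, hu, v, hv, rfl⟩
    have hv' : v = [] := hv
    subst hv'
    simpa using hu
  · intro hw; exact ⟨w, hw, [], rfl, by simp⟩

lemma Idl_subset_cons {A : Type*} (γ : Atom A) (r : List (Atom A)) :
    Idl r ⊆ Idl (γ :: r) :=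
  fun w hw => ⟨[], atom_nil_mem γ, w, hw, rfl⟩

lemma cancel_single {A : Type*} {c : A} {a' b' : List (Atom A)}
    (h : Idl (Atom.single c :: a') ⊆ Idl (Atom.single c :: b')) :
    Idl a' ⊆ Idl b' := by
  intro v hv
  have hz : (c :: v) ∈ Idl (Atom.single c :: a') :=
    ⟨[c], Or.inr rfl, v, hv, rfl⟩
  obtain ⟨p, hp, q, hq, heq⟩ := h hz
  rcases hp with hp | hp
  · subst hp
    simp only [List.nil_append] at heq
    subst heq
    exact Idl_dcl b' v (c :: v) (List.sublist_cons_self c v) hq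
  · subst hp
    have hvq : v = q := by simpa using heq
    rw [hvq]; exact hq

lemma dropHead {A : Type*} {α β : Atom A} {a' b' : List (Atom A)}
    (h : Idl (α :: a') ⊆ Idl (β :: b'))
    (hns : ¬ α.lang ⊆ β.lang) :
    Idl (α :: a') ⊆ Idl b' := by
  obtain ⟨x, hx, hxn⟩ := Set.not_subset.mp hns
  intro w hw
  obtain ⟨u, hu, v, hv, rfl⟩ := hw
  cases α with
  | single c =>
    have hxc : x = [c] := by
      rcases hx with hx | hx
      · exact absurd (hx ▸ atom_nil_mem β) hxn
      · exact hx
    subst hxc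
    have hz : (c :: v) ∈ Idl (Atom.single c :: a') := ⟨[c], Or.inr rfl, v, hv, rfl⟩
    obtain ⟨p, hp, q, hq, heq⟩ := h hz
    cases p with
    | nil =>
      simp only [List.nil_append] at heq
      subst heq
      have hsub : List.Sublist (u ++ v) (c :: v) := by
        rcases hu with hu | hu
        · subst hu; exact List.sublist_cons_self c v
        · subst hu; exact List.Sublist.refl _
      exact Idl_dcl b' _ _ hsub hq
    | cons dd p' =>
      exfalso
      rw [List.cons_append, List.cons.injEq] at heq
      have hmem : c ∈ dd :: p' := by rw [heq.1]; exact List.mem_cons_self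
      exact hxn (atom_dcl β [c] (dd :: p') (List.singleton_sublist.mpr hmem) hp)
  | alph d =>
    have hz : (x ++ u) ++ v ∈ Idl (Atom.alph d :: a') := by
      refine ⟨x ++ u, ?_, v, hv, rfl⟩
      intro e he
      rcases List.mem_append.mp he with he | he
      · exact hx e he
      · exact hu e he
    obtain ⟨p, hp, q, hq, heq⟩ := h hz
    rw [List.append_assoc] at heq
    rcases List.append_eq_append_iff.mp heq.symm with ⟨a'', h1, h2⟩ | ⟨c'', h1, h2⟩
    · rw [h2] at hq
      exact Idl_dcl b' _ _ (List.suffix_append a'' (u ++ v)).sublist hq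
    · exfalso
      have hxp : List.Sublist x p := by rw [h1]; exact (List.prefix_append x c'').sublist
      exact hxn (atom_dcl β x p hxp hp)

lemma atom_exists_ne_nil {A : Type*} {γ : Atom A} (hγ : γ.Valid) :
    ∃ x ∈ γ.lang, x ≠ [] := by
  cases γ with
  | single c => exact ⟨[c], Or.inr rfl, by simp⟩
  | alph d =>
    obtain ⟨c, hc⟩ := hγ
    exact ⟨[c], by intro e he; simp at he; subst he; exact hc, by simp⟩

lemma single_of_subset_single {A : Type*} {α : Atom A} {c : A} (hα : α.Valid)
    (h : α.lang ⊆ (Atom.single c).lang) : α = Atom.single c := by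
  cases α with
  | single c' =>
    have h' : [c'] ∈ (Atom.single c).lang := h (Or.inr rfl)
    simp only [Atom.lang, Set.mem_insert_iff, Set.mem_singleton_iff] at h'
    rcases h' with h' | h'
    · simp at h'
    · simp only [List.cons.injEq] at h'
      rw [h'.1]
  | alph d =>
    exfalso
    obtain ⟨e, he⟩ := hα
    have h' : [e, e] ∈ (Atom.single c).lang := by
      apply h; intro x hx; simp at hx; subst hx; exact he
    simp only [Atom.lang, Set.mem_insert_iff, Set.mem_singleton_iff] at h'
    rcases h' with h' | h' <;> simp at h'

theorem ideal_embedding {A : Type*} (a b : List (Atom A))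
    (ha : ∀ α ∈ a, α.Valid) (hb : ∀ α ∈ b, α.Valid)
    (h : Idl a ⊆ Idl b) :
    ∃ f : Fin a.length → Fin b.length,
      Monotone f ∧
      (∀ i, Idl [a.get i] ⊆ Idl [b.get (f i)]) ∧
      (∀ j : Fin b.length, (∃ c : A, b.get j = Atom.single c) →
        ∀ i i', f i = j → f i' = j → i = i') := by
  induction a generalizing b with
  | nil =>
    refine ⟨Fin.elim0, ?_, ?_, ?_⟩
    · intro i; exact i.elim0
    · intro i; exact i.elim0
    · intro j _ i; exact i.elim0
  | cons α a' IH =>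
    have hαv : α.Valid := ha α (List.mem_cons_self)
    have ha' : ∀ γ ∈ a', γ.Valid := fun γ hγ => ha γ (List.mem_cons_of_mem _ hγ)
    induction b with
    | nil =>
      exfalso
      obtain ⟨x, hx, hxn⟩ := atom_exists_ne_nil hαv
      have hm : x ++ [] ∈ Idl (α :: a') := ⟨x, hx, [], Idl_nil_mem a', rfl⟩
      have hx0 : x ++ [] = [] := h hm
      simp at hx0
      exact hxn hx0
    | cons β b' IHb =>
      have hβv : β.Valid := hb β (List.mem_cons_self)
      have hb' : ∀ γ ∈ b', γ.Valid := fun γ hγ => hb γ (List.mem_cons_of_mem _ hγ)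
      by_cases hsub : α.lang ⊆ β.lang
      · cases β with
        | single c =>
          have hαc : α = Atom.single c := single_of_subset_single hαv hsub
          subst hαc
          have hcan : Idl a' ⊆ Idl b' := cancel_single h
          obtain ⟨f', hmono, hincl, hinj⟩ := IH b' ha' hb' hcan
          refine ⟨fun i => Fin.cases (0 : Fin (b'.length + 1)) (fun k => (f' k).succ) i,
            ?_, ?_, ?_⟩
          · intro i j hij
            induction j using Fin.cases with
            | zero =>
              cases le_antisymm hij (Fin.zero_le i)
              exact le_refl _
            | succ j' =>
              induction i using Fin.cases with
              | zero =>
                simp only [Fin.cases_zero]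
                exact Fin.zero_le _
              | succ i' =>
                simp only [Fin.cases_succ]
                exact Fin.succ_le_succ_iff.mpr (hmono (Fin.succ_le_succ_iff.mp hij))
          · intro i
            induction i using Fin.cases with
            | zero =>
              simp only [Fin.cases_zero]
              exact subset_rfl
            | succ i' =>
              simp only [Fin.cases_succ, List.get_cons_succ]
              exact hincl i'
          · intro j hj i i' hi hi'
            induction j using Fin.cases with
            | zero =>
              induction i using Fin.cases with
              | zero =>
                induction i' using Fin.cases with
                | zero => rfl
                | succ k =>
                  simp only [Fin.cases_succ] at hi'
                  exact absurd hi' (Fin.succ_ne_zero _)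
              | succ k =>
                simp only [Fin.cases_succ] at hi
                exact absurd hi (Fin.succ_ne_zero _)
            | succ j' =>
              induction i using Fin.cases with
              | zero =>
                simp only [Fin.cases_zero] at hi
                exact absurd hi.symm (Fin.succ_ne_zero _)
              | succ k =>
                induction i' using Fin.cases with
                | zero =>
                  simp only [Fin.cases_zero] at hi'
                  exact absurd hi'.symm (Fin.succ_ne_zero _)
                | succ k' =>
                  simp only [Fin.cases_succ] at hi hi'
                  have h1 : f' k = j' := Fin.succ_injective _ hi
                  have h2 : f' k' = j' := Fin.succ_injective _ hi'
                  have hkk : k = k' := hinj j' (by simpa using hj) k k' h1 h2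
                  rw [hkk]
        | alph d =>
          have hsub' : Idl a' ⊆ Idl (Atom.alph d :: b') :=
            fun w hw => h (Idl_subset_cons α a' hw)
          obtain ⟨f'', hmono, hincl, hinj⟩ := IH (Atom.alph d :: b') ha' hb hsub'
          refine ⟨fun i => Fin.cases (0 : Fin (b'.length + 1)) f'' i, ?_, ?_, ?_⟩
          · intro i j hij
            induction j using Fin.cases with
            | zero =>
              cases le_antisymm hij (Fin.zero_le i)
              exact le_refl _
            | succ j' =>
              induction i using Fin.cases with
              | zero =>
                simp only [Fin.cases_zero]
                exact Fin.zero_le _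
              | succ i' =>
                simp only [Fin.cases_succ]
                exact hmono (Fin.succ_le_succ_iff.mp hij)
          · intro i
            induction i using Fin.cases with
            | zero =>
              simp only [Fin.cases_zero]
              have e1 : (α :: a').get (0 : Fin (a'.length + 1)) = α := rfl
              have e2 : (Atom.alph d :: b').get (0 : Fin (b'.length + 1)) = Atom.alph d := rfl
              rw [e1, e2, Idl_singleton, Idl_singleton]
              exact hsub
            | succ i' =>
              simp only [Fin.cases_succ, List.get_cons_succ]
              exact hincl i'
          · intro j hj i i' hi hi'
            have hj0 : j ≠ (0 : Fin (b'.length + 1)) := by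
              intro h0
              subst h0
              obtain ⟨c, hc⟩ := hj
              have e2 : (Atom.alph d :: b').get (0 : Fin (b'.length + 1)) = Atom.alph d := rfl
              rw [e2] at hc
              simp at hc
            induction i using Fin.cases with
            | zero =>
              simp only [Fin.cases_zero] at hi
              exact absurd hi.symm hj0
            | succ k =>
              induction i' using Fin.cases with
              | zero =>
                simp only [Fin.cases_zero] at hi'
                exact absurd hi'.symm hj0
              | succ k' =>
                simp only [Fin.cases_succ] at hi hi'
                have hkk : k = k' := hinj j hj k k' hi hi'
                rw [hkk]
      · have h' : Idl (α :: a') ⊆ Idl b' := dropHead h hsub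
        obtain ⟨f', hmono, hincl, hinj⟩ := IHb hb' h'
        refine ⟨fun i => (f' i).succ, ?_, ?_, ?_⟩
        · intro i j hij
          exact Fin.succ_le_succ_iff.mpr (hmono hij)
        · intro i
          simp only [List.get_cons_succ]
          exact hincl i
        · intro j hj i i' hi hi'
          induction j using Fin.cases with
          | zero => exact absurd hi (Fin.succ_ne_zero _)
          | succ j' =>
            have h1 : f' i = j' := Fin.succ_injective _ hi
            have h2 : f' i' = j' := Fin.succ_injective _ hi'
            exact hinj j' (by simpa using hj) i i' h1 h2
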